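/- For all integers M ≥ 1 and 1 ≤ q ≤ M: S_M(1) = (∏_{j=1}^{q} (2j−3) / 2^q) · Σ_{r=0}^{M−q} (−1/4)^r · (2r+1)! / ((r+q)!·r!) · C(M−q, r). -/
import Mathlib


/-- `S_M(m) := Σ_{r=0}^{M} (−1/4)^r · (2m+2r−1)! / (r!·(m+r−1)!) · C(m−1+M, m−1+r)`. -/
def Sdef (M m : ℕ) : ℚ :=
  ∑ r ∈ Finset.range (M + 1),
    (-1 / 4 : ℚ) ^ r * ((2 * m + 2 * r - 1).factorial : ℚ) /
        ((r.factorial : ℚ) * ((m + r - 1).factorial : ℚ)) *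
      ((m - 1 + M).choose (m - 1 + r) : ℚ)

def Fdef (n q : ℕ) : ℚ :=
  ∑ r ∈ Finset.range (n + 1),
    (-1 / 4 : ℚ) ^ r * ((2 * r + 1).factorial : ℚ) /
        (((r + q).factorial : ℚ) * (r.factorial : ℚ)) *
      (n.choose r : ℚ)

lemma a_term (r q : ℕ) :
    (-1 / 4 : ℚ) ^ r * ((2 * r + 1).factorial : ℚ) /
        (((r + q).factorial : ℚ) * (r.factorial : ℚ))
    + (-1 / 4 : ℚ) ^ (r+1) * ((2 * (r+1) + 1).factorial : ℚ) /
        ((((r+1) + q).factorial : ℚ) * ((r+1).factorial : ℚ))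
    = (2 * q - 1) / 2 *
      ((-1 / 4 : ℚ) ^ r * ((2 * r + 1).factorial : ℚ) /
        (((r + (q+1)).factorial : ℚ) * (r.factorial : ℚ))) := by
  have h1 : ((2 * (r+1) + 1).factorial : ℚ)
      = ((2*r+1 : ℕ) + 2) * ((2*r+1 : ℕ) + 1) * ((2 * r + 1).factorial : ℚ) := by
    have e : 2 * (r+1) + 1 = ((2*r+1) + 1) + 1 := by ring
    rw [e, Nat.factorial_succ, Nat.factorial_succ]; push_cast; ring
  have h2 : (((r+1) + q).factorial : ℚ) = ((r+q : ℕ) + 1) * ((r+q).factorial : ℚ) := by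
    have e : (r+1) + q = (r+q) + 1 := by ring
    rw [e, Nat.factorial_succ]; push_cast; ring
  have h3 : ((r+1).factorial : ℚ) = ((r : ℕ)+1) * (r.factorial : ℚ) := by
    rw [Nat.factorial_succ]; push_cast; ring
  have h4 : ((r + (q+1)).factorial : ℚ) = ((r+q : ℕ) + 1) * ((r+q).factorial : ℚ) := by
    have e : r + (q+1) = (r+q) + 1 := by ring
    rw [e, Nat.factorial_succ]; push_cast; ring
  have hf1 : ((r+q).factorial : ℚ) ≠ 0 := by positivity
  have hf2 : (r.factorial : ℚ) ≠ 0 := by positivity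
  rw [h1, h2, h3, h4, pow_succ]
  push_cast
  field_simp
  ring

lemma F_rec (n q : ℕ) : Fdef (n+1) q = (2 * q - 1) / 2 * Fdef n (q+1) := by
  unfold Fdef
  rw [Finset.sum_range_succ']
  have key : ∀ r ∈ Finset.range (n+1),
      (-1 / 4 : ℚ) ^ (r+1) * ((2 * (r+1) + 1).factorial : ℚ) /
        ((((r+1) + q).factorial : ℚ) * ((r+1).factorial : ℚ)) *
        ((n+1).choose (r+1) : ℚ)
      = (-1 / 4 : ℚ) ^ (r+1) * ((2 * (r+1) + 1).factorial : ℚ) /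
        ((((r+1) + q).factorial : ℚ) * ((r+1).factorial : ℚ)) *
        (n.choose r : ℚ)
      + (-1 / 4 : ℚ) ^ (r+1) * ((2 * (r+1) + 1).factorial : ℚ) /
        ((((r+1) + q).factorial : ℚ) * ((r+1).factorial : ℚ)) *
        (n.choose (r+1) : ℚ) := by
    intro r _
    rw [Nat.choose_succ_succ]
    push_cast; ring
  rw [Finset.sum_congr rfl key, Finset.sum_add_distrib]
  have e1 : (∑ r ∈ Finset.range (n+1),
      (-1 / 4 : ℚ) ^ (r+1) * ((2 * (r+1) + 1).factorial : ℚ) /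
        ((((r+1) + q).factorial : ℚ) * ((r+1).factorial : ℚ)) *
        (n.choose (r+1) : ℚ))
      + (-1 / 4 : ℚ) ^ 0 * ((2 * 0 + 1).factorial : ℚ) /
        (((0 + q).factorial : ℚ) * ((0:ℕ).factorial : ℚ)) * ((n+1).choose 0 : ℚ)
      = ∑ r ∈ Finset.range (n+1),
        (-1 / 4 : ℚ) ^ r * ((2 * r + 1).factorial : ℚ) /
          (((r + q).factorial : ℚ) * (r.factorial : ℚ)) * (n.choose r : ℚ) := by
    have := (Finset.sum_range_succ' (fun r =>
      (-1 / 4 : ℚ) ^ r * ((2 * r + 1).factorial : ℚ) /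
        (((r + q).factorial : ℚ) * (r.factorial : ℚ)) * (n.choose r : ℚ)) (n+1)).symm
    simp only [Nat.choose_zero_right] at this ⊢
    rw [this, Finset.sum_range_succ, Nat.choose_succ_self]
    simp
  rw [add_assoc, e1, ← Finset.sum_add_distrib, Finset.mul_sum]
  refine Finset.sum_congr rfl fun r _ => ?_
  have := a_term r q
  calc (-1 / 4 : ℚ) ^ (r+1) * ((2 * (r+1) + 1).factorial : ℚ) /
        ((((r+1) + q).factorial : ℚ) * ((r+1).factorial : ℚ)) * (n.choose r : ℚ)
      + (-1 / 4 : ℚ) ^ r * ((2 * r + 1).factorial : ℚ) /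
        (((r + q).factorial : ℚ) * (r.factorial : ℚ)) * (n.choose r : ℚ)
      = ((-1 / 4 : ℚ) ^ r * ((2 * r + 1).factorial : ℚ) /
        (((r + q).factorial : ℚ) * (r.factorial : ℚ))
      + (-1 / 4 : ℚ) ^ (r+1) * ((2 * (r+1) + 1).factorial : ℚ) /
        ((((r+1) + q).factorial : ℚ) * ((r+1).factorial : ℚ))) * (n.choose r : ℚ) := by ring
    _ = _ := by rw [this]; ring

lemma F_chain (M : ℕ) : ∀ q ≤ M, Fdef M 0 =
    (∏ j ∈ Finset.Icc 1 q, (2 * (j : ℚ) - 3)) / 2 ^ q * Fdef (M - q) q := by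
  intro q hq
  induction q with
  | zero => simp
  | succ q ih =>
    have hq' : q ≤ M := Nat.le_of_succ_le hq
    rw [ih hq']
    have hM : M - q = (M - (q+1)) + 1 := by omega
    rw [hM, F_rec]
    rw [Finset.prod_Icc_succ_top (by omega : 1 ≤ q + 1)]
    push_cast
    ring


/-- For all integers `M ≥ 1` and `1 ≤ q ≤ M`:
`S_M(1) = (∏_{j=1}^{q} (2j−3) / 2^q) · Σ_{r=0}^{M−q} (−1/4)^r · (2r+1)! /
((r+q)!·r!) · C(M−q, r)`. -/
theorem stmt_16 (M q : ℕ) (hM : 1 ≤ M) (hq1 : 1 ≤ q) (hqM : q ≤ M) :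
    Sdef M 1 =
      (∏ j ∈ Finset.Icc 1 q, (2 * (j : ℚ) - 3)) / 2 ^ q *
        ∑ r ∈ Finset.range (M - q + 1),
          (-1 / 4 : ℚ) ^ r * ((2 * r + 1).factorial : ℚ) /
              (((r + q).factorial : ℚ) * (r.factorial : ℚ)) *
            ((M - q).choose r : ℚ) := by
  have hS : Sdef M 1 = Fdef M 0 := by
    unfold Sdef Fdef
    refine Finset.sum_congr rfl fun r _ => ?_
    have e1 : 2 * 1 + 2 * r - 1 = 2 * r + 1 := by omega
    have e2 : 1 + r - 1 = r := by omega
    have e3 : 1 - 1 + M = M := by omega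
    have e4 : 1 - 1 + r = r := by omega
    rw [e1, e2, e3, e4]
    ring
  rw [hS, F_chain M q hqM]
  rfl
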